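/- Let Γ be a finite set of N directed edges, each edge e assigned a unit vector v(e) ∈ {±1, ±i, ±ω, ±iω} ⊂ ℂ with ω = e^{iα}, 0 < α < π/2. If Γ partitions into edge-disjoint directed cycles and along each cycle the assigned vectors sum to 0, then N is even. -/

import Mathlib

open Real

/-- A closed directed trail in a directed multigraph given by `src`/`tgt`. -/
def DIsClosedTrail {V E : Type*} (src tgt : E → V) (l : List E) : Prop :=
  l.Nodup ∧ l.Chain' (fun e f => tgt e = src f) ∧
    l.getLast?.map tgt = l.head?.map src

lemma rep_lemma {E : Type*} (α : ℝ) (v : E → ℂ)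
    (hv : ∀ e, v e ∈ ({1, -1, Complex.I, -Complex.I,
      Complex.exp (α * Complex.I), -Complex.exp (α * Complex.I),
      Complex.I * Complex.exp (α * Complex.I),
      -(Complex.I * Complex.exp (α * Complex.I))} : Set ℂ)) (l : List E) :
    ∃ a b c d : ℤ, (l.map v).sum = a + b * Complex.I +
      (c + d * Complex.I) * Complex.exp (α * Complex.I) ∧
      ((a + b + c + d : ℤ) : ZMod 2) = (l.length : ZMod 2) := by
  have h2 : (2 : ZMod 2) = 0 := rfl
  induction l with
  | nil => exact ⟨0, 0, 0, 0, by simp, by simp⟩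
  | cons e l ih =>
    obtain ⟨a, b, c, d, h1, hpar⟩ := ih
    have he := hv e
    simp only [Set.mem_insert_iff, Set.mem_singleton_iff] at he
    rcases he with h|h|h|h|h|h|h|h
    · exact ⟨a+1, b, c, d, by simp [h, h1]; push_cast; ring,
        by simp only [List.length_cons, Nat.cast_add, Nat.cast_one]; push_cast at hpar ⊢; linear_combination hpar⟩
    · exact ⟨a-1, b, c, d, by simp [h, h1]; push_cast; ring,
        by simp only [List.length_cons, Nat.cast_add, Nat.cast_one]; push_cast at hpar ⊢; linear_combination hpar - h2⟩
    · exact ⟨a, b+1, c, d, by simp [h, h1]; push_cast; ring,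
        by simp only [List.length_cons, Nat.cast_add, Nat.cast_one]; push_cast at hpar ⊢; linear_combination hpar⟩
    · exact ⟨a, b-1, c, d, by simp [h, h1]; push_cast; ring,
        by simp only [List.length_cons, Nat.cast_add, Nat.cast_one]; push_cast at hpar ⊢; linear_combination hpar - h2⟩
    · exact ⟨a, b, c+1, d, by simp [h, h1]; push_cast; ring,
        by simp only [List.length_cons, Nat.cast_add, Nat.cast_one]; push_cast at hpar ⊢; linear_combination hpar⟩
    · exact ⟨a, b, c-1, d, by simp [h, h1]; push_cast; ring,
        by simp only [List.length_cons, Nat.cast_add, Nat.cast_one]; push_cast at hpar ⊢; linear_combination hpar - h2⟩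
    · exact ⟨a, b, c, d+1, by simp [h, h1]; push_cast; ring,
        by simp only [List.length_cons, Nat.cast_add, Nat.cast_one]; push_cast at hpar ⊢; linear_combination hpar⟩
    · exact ⟨a, b, c, d-1, by simp [h, h1]; push_cast; ring,
        by simp only [List.length_cons, Nat.cast_add, Nat.cast_one]; push_cast at hpar ⊢; linear_combination hpar - h2⟩

theorem stmt_16 {V E : Type*} [Fintype E] (src tgt : E → V) (N : ℕ)
    (hN : Fintype.card E = N)
    (α : ℝ) (hα0 : 0 < α) (hα1 : α < π / 2)
    (v : E → ℂ)
    (hv : ∀ e, v e ∈ ({1, -1, Complex.I, -Complex.I,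
      Complex.exp (α * Complex.I), -Complex.exp (α * Complex.I),
      Complex.I * Complex.exp (α * Complex.I),
      -(Complex.I * Complex.exp (α * Complex.I))} : Set ℂ))
    (cs : List (List E))
    (hcycles : ∀ c ∈ cs, c ≠ [] ∧ DIsClosedTrail src tgt c)
    (hnodup : cs.flatten.Nodup) (hall : ∀ e : E, e ∈ cs.flatten)
    (hzero : ∀ c ∈ cs, (c.map v).sum = 0) :
    Even N := by
  classical
  -- each cycle has even length
  have heven : ∀ c ∈ cs, Even c.length := by
    intro c hc
    obtain ⟨a, b, c', d, h1, hpar⟩ := rep_lemma α v hv c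
    rw [hzero c hc] at h1
    -- a + b I = -(c' + d I) * exp(αI)
    have habs : ‖((a : ℂ) + b * Complex.I)‖ =
        ‖((c' : ℂ) + d * Complex.I)‖ := by
      have : ((a : ℂ) + b * Complex.I) =
          -(((c' : ℂ) + d * Complex.I) * Complex.exp (α * Complex.I)) := by
        linear_combination -h1
      rw [this, norm_neg, norm_mul, Complex.norm_exp]
      simp
    have hsq : a ^ 2 + b ^ 2 = c' ^ 2 + d ^ 2 := by
      have := congrArg (· ^ 2) habs
      simp only [Complex.sq_norm] at this
      have h2 : ((a : ℝ) ^ 2 + (b : ℝ) ^ 2) = ((c' : ℝ) ^ 2 + (d : ℝ) ^ 2) := by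
        have e1 : ((a : ℂ) + b * Complex.I) = ((a : ℝ) : ℂ) + ((b : ℝ) : ℂ) * Complex.I := by
          push_cast; ring
        have e2 : ((c' : ℂ) + d * Complex.I) = ((c' : ℝ) : ℂ) + ((d : ℝ) : ℂ) * Complex.I := by
          push_cast; ring
        rw [e1, e2, Complex.normSq_add_mul_I, Complex.normSq_add_mul_I] at this
        exact this
      exact_mod_cast h2
    have hsqz : ∀ x : ZMod 2, x ^ 2 = x := by decide
    have : ((c.length : ℕ) : ZMod 2) = 0 := by
      rw [← hpar]
      have : ((a + b + c' + d : ℤ) : ZMod 2) =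
          ((a ^ 2 + b ^ 2 + c' ^ 2 + d ^ 2 : ℤ) : ZMod 2) := by
        push_cast
        rw [hsqz, hsqz, hsqz, hsqz]
      rw [this, hsq]
      push_cast
      rw [hsqz, hsqz]
      ring_nf
      rw [show ((2 : ZMod 2)) = 0 from rfl]
      ring
    exact even_iff_two_dvd.mpr ((ZMod.natCast_eq_zero_iff _ 2).mp this)
  -- N = flatten length
  have hlen : cs.flatten.length = N := by
    rw [← hN, ← List.toFinset_card_of_nodup hnodup]
    congr 1
    apply Finset.eq_univ_iff_forall.mpr
    intro e
    simp [hall e]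
  rw [← hlen, List.length_flatten]
  have key : ∀ ls : List (List E), (∀ c ∈ ls, Even c.length) →
      Even (ls.map List.length).sum := by
    intro ls
    induction ls with
    | nil => intro _; simp
    | cons c t ih =>
      intro h
      simp only [List.map_cons, List.sum_cons]
      exact (h c (by simp)).add (ih fun c hc => h c (by simp [hc]))
  exact key cs heven
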